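/- Let f: R^d -> R be convex, L-Lipschitz differentiable, and restricted nu-strongly convex, meaning f(x) - min f >= (nu/2) ||x - P_*(x)||_2^2 for all x. Suppose the inexact gradients satisfy ||g_k - hat{g}_k||_2^2 <= eps_rel ||g_k||_2^2 + eps_abs with eps_rel < 1, and x_{k+1} = x_k - (1/L) hat{g}_k. Then e_k = f(x_k) - min f satisfies e_k <= (1 - (1-eps_rel) nu / (4L))^k e_0 + 2 eps_abs / (nu (1 - eps_rel)). -/

import Mathlib

open scoped RealInnerProductSpace

variable {d : ℕ}

lemma line_hasDerivAt (f : EuclideanSpace ℝ (Fin d) → ℝ) (hdiff : Differentiable ℝ f)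
    (x v : EuclideanSpace ℝ (Fin d)) (t : ℝ) :
    HasDerivAt (fun s : ℝ => f (x + s • v)) (⟪gradient f (x + t • v), v⟫) t := by
  have h2 : HasDerivAt (fun s : ℝ => x + s • v) v t := by
    simpa using ((hasDerivAt_id t).smul_const v).const_add x
  have h1 : HasFDerivAt f (InnerProductSpace.toDual ℝ _ (gradient f (x + t • v))) (x + t • v) :=
    hasGradientAt_iff_hasFDerivAt.mp (hdiff _).hasGradientAt
  exact h1.comp_hasDerivAt t h2

lemma convex_grad_ineq (f : EuclideanSpace ℝ (Fin d) → ℝ) (hconv : ConvexOn ℝ Set.univ f)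
    (hdiff : Differentiable ℝ f) (x y : EuclideanSpace ℝ (Fin d)) :
    f x + ⟪gradient f x, y - x⟫ ≤ f y := by
  have hφ : ConvexOn ℝ Set.univ (fun t : ℝ => f (x + t • (y - x))) := by
    have h := hconv.comp_affineMap (AffineMap.lineMap x y)
    have heq : (fun t : ℝ => f (x + t • (y - x))) = (f ∘ (AffineMap.lineMap x y)) := by
      funext t
      simp [AffineMap.lineMap_apply, vsub_eq_sub, vadd_eq_add, add_comm]
    rw [heq]
    simpa using h
  have hd : HasDerivAt (fun t : ℝ => f (x + t • (y - x))) ⟪gradient f x, y - x⟫ 0 := by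
    have := line_hasDerivAt f hdiff x (y - x) 0
    simpa using this
  have hs := hφ.le_slope_of_hasDerivAt (Set.mem_univ (0:ℝ)) (Set.mem_univ 1) one_pos hd
  have hsl : slope (fun t : ℝ => f (x + t • (y - x))) 0 1 = f y - f x := by
    simp [slope]
  rw [hsl] at hs
  linarith

lemma descent_lemma (f : EuclideanSpace ℝ (Fin d) → ℝ) (hdiff : Differentiable ℝ f) {L : ℝ}
    (hL : 0 < L) (hlip : ∀ x y, ‖gradient f x - gradient f y‖ ≤ L * ‖x - y‖)
    (x y : EuclideanSpace ℝ (Fin d)) :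
    f y ≤ f x + ⟪gradient f x, y - x⟫ + L / 2 * ‖y - x‖ ^ 2 := by
  set v := y - x with hv
  set c : ℝ := ⟪gradient f x, v⟫ with hc
  set g : ℝ → ℝ := fun t => f (x + t • v) - t * c - L * ‖v‖ ^ 2 * t ^ 2 / 2 with hg
  have hgd : ∀ t : ℝ, HasDerivAt g ((⟪gradient f (x + t • v), v⟫) - c - L * ‖v‖ ^ 2 * t) t := by
    intro t
    have h1 := line_hasDerivAt f hdiff x v t
    have h2 : HasDerivAt (fun s : ℝ => s * c) c t := by simpa using (hasDerivAt_id t).mul_const c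
    have h3 : HasDerivAt (fun s : ℝ => L * ‖v‖ ^ 2 * s ^ 2 / 2) (L * ‖v‖ ^ 2 * t) t := by
      have h4 := ((hasDerivAt_pow 2 t).const_mul (L * ‖v‖ ^ 2)).div_const 2
      refine h4.congr_deriv ?_
      ring
    exact (h1.sub h2).sub h3
  have anti : AntitoneOn g (Set.Icc (0:ℝ) 1) := by
    apply antitoneOn_of_deriv_nonpos (convex_Icc 0 1)
    · exact fun t _ => (hgd t).continuousAt.continuousWithinAt
    · intro t _
      exact (hgd t).differentiableAt.differentiableWithinAt
    · intro t ht
      rw [interior_Icc] at ht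
      rw [(hgd t).deriv]
      have hb : (⟪gradient f (x + t • v) - gradient f x, v⟫) ≤ (L * ‖t • v‖) * ‖v‖ := by
        calc (⟪gradient f (x + t • v) - gradient f x, v⟫)
            ≤ ‖gradient f (x + t • v) - gradient f x‖ * ‖v‖ := real_inner_le_norm _ _
          _ ≤ (L * ‖x + t • v - x‖) * ‖v‖ := by
              apply mul_le_mul_of_nonneg_right _ (norm_nonneg v)
              exact hlip _ _
          _ = (L * ‖t • v‖) * ‖v‖ := by rw [add_sub_cancel_left]
      have hns : ‖t • v‖ = t * ‖v‖ := by
        rw [norm_smul, Real.norm_eq_abs, abs_of_nonneg ht.1.le]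
      rw [inner_sub_left] at hb
      rw [hns] at hb
      nlinarith [sq_nonneg ‖v‖]
  have h01 := anti (Set.left_mem_Icc.mpr zero_le_one) (Set.right_mem_Icc.mpr zero_le_one)
    zero_le_one
  have e1 : x + (1:ℝ) • v = y := by rw [one_smul, hv]; abel
  have e0 : x + (0:ℝ) • v = x := by rw [zero_smul, add_zero]
  simp only [hg, e1, e0] at h01
  simp only [one_mul, one_pow, mul_zero, zero_mul, mul_one, sub_zero, zero_pow] at h01
  linarith

lemma gradient_eq_zero_of_min (f : EuclideanSpace ℝ (Fin d) → ℝ) (z : EuclideanSpace ℝ (Fin d))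
    (hz : ∀ w, f z ≤ f w) : gradient f z = 0 := by
  have hlm : IsLocalMin f z := Filter.Eventually.of_forall hz
  have hf := hlm.fderiv_eq_zero
  simp [gradient, hf]

lemma aux_rsc {A D e w : ℝ} (hw : 0 < w) (he : 0 ≤ e) (h1 : e ≤ A * D)
    (h2 : w / 2 * D ^ 2 ≤ e) : w / 2 * e ≤ A ^ 2 := by
  rcases eq_or_lt_of_le he with h | h
  · rw [← h, mul_zero]
    exact sq_nonneg _
  · have hsq := mul_self_le_mul_self he h1
    nlinarith [sq_nonneg A, mul_le_mul_of_nonneg_left h2 (sq_nonneg A)]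

set_option maxHeartbeats 1000000 in
/-- Linear convergence of inexact gradient descent under restricted strong convexity. -/
theorem inexact_gd_linear_convergence {d : ℕ} (L ν εrel εabs : ℝ)
    (hL : 0 < L) (hν : 0 < ν) (hrel0 : 0 ≤ εrel) (hrel1 : εrel < 1) (habs : 0 ≤ εabs)
    (f : EuclideanSpace ℝ (Fin d) → ℝ)
    (hconv : ConvexOn ℝ Set.univ f)
    (hdiff : Differentiable ℝ f)
    (hlip : ∀ x y, ‖gradient f x - gradient f y‖ ≤ L * ‖x - y‖)
    (xstar : EuclideanSpace ℝ (Fin d)) (hmin : ∀ y, f xstar ≤ f y)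
    (hrsc : ∀ y : EuclideanSpace ℝ (Fin d), ∃ z,
      (∀ w, f z ≤ f w) ∧ (∀ w, (∀ w', f w ≤ f w') → ‖y - z‖ ≤ ‖y - w‖) ∧
      ν / 2 * ‖y - z‖ ^ 2 ≤ f y - f xstar)
    (x ghat : ℕ → EuclideanSpace ℝ (Fin d))
    (hstep : ∀ k, x (k + 1) = x k - (1 / L) • ghat k)
    (herr : ∀ k, ‖gradient f (x k) - ghat k‖ ^ 2 ≤
      εrel * ‖gradient f (x k)‖ ^ 2 + εabs) :
    ∀ k, f (x k) - f xstar ≤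
      (1 - (1 - εrel) * ν / (4 * L)) ^ k * (f (x 0) - f xstar)
        + 2 * εabs / (ν * (1 - εrel)) := by
  have hCnn : 0 ≤ 2 * εabs / (ν * (1 - εrel)) := by
    apply div_nonneg (by linarith)
    have : 0 < 1 - εrel := by linarith
    positivity
  by_cases hconst : ∀ y, f y ≤ f xstar
  · intro k
    have h1 : f (x k) - f xstar ≤ 0 := sub_nonpos.mpr (hconst _)
    have h2 : f (x 0) - f xstar = 0 :=
      le_antisymm (sub_nonpos.mpr (hconst _)) (sub_nonneg.mpr (hmin _))
    rw [h2, mul_zero, zero_add]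
    linarith
  · push_neg at hconst
    obtain ⟨y, hy⟩ := hconst
    -- ν ≤ L
    have hνL : ν ≤ L := by
      obtain ⟨z, hz1, hz2, hz3⟩ := hrsc y
      have hfz : f z = f xstar := le_antisymm (hz1 _) (hmin _)
      have hgz : gradient f z = 0 := gradient_eq_zero_of_min f z hz1
      have hd := descent_lemma f hdiff hL hlip z y
      rw [hgz, inner_zero_left, add_zero] at hd
      have hyz : 0 < ‖y - z‖ := by
        rw [norm_pos_iff, sub_ne_zero]
        intro h
        rw [h, hfz] at hy
        exact lt_irrefl _ hy
      nlinarith [pow_pos hyz 2]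
    set ρ : ℝ := 1 - (1 - εrel) * ν / (4 * L) with hρdef
    have hρ0 : 0 ≤ ρ := by
      rw [hρdef]
      have h1 : (1 - εrel) * ν / (4 * L) ≤ 1 := by
        rw [div_le_one (by positivity)]
        nlinarith
      linarith
    set C : ℝ := 2 * εabs / (ν * (1 - εrel)) with hCdef
    have hre : (0:ℝ) < 1 - εrel := by linarith
    have hCfix : ρ * C + εabs / (2 * L) = C := by
      rw [hρdef, hCdef]
      field_simp [hν.ne', hL.ne', hre.ne']
      ring
    have key : ∀ k, f (x (k + 1)) - f xstar ≤ ρ * (f (x k) - f xstar) + εabs / (2 * L) := by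
      intro k
      set g := gradient f (x k) with hgdef
      have hd := descent_lemma f hdiff hL hlip (x k) (x (k + 1))
      have hx' : x (k + 1) - x k = -((1 / L) • ghat k) := by
        rw [hstep k]; abel
      rw [hx'] at hd
      have hinner : (⟪g, -((1 / L) • ghat k)⟫) = -(1 / L) * ⟪g, ghat k⟫ := by
        rw [inner_neg_right, real_inner_smul_right]; ring
      have hnorm : ‖-((1 / L) • ghat k)‖ ^ 2 = (1 / L) ^ 2 * ‖ghat k‖ ^ 2 := by
        rw [norm_neg, norm_smul, Real.norm_eq_abs, abs_of_pos (by positivity : (0:ℝ) < 1 / L),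
          mul_pow]
      rw [hinner, hnorm] at hd
      have hiden : ‖g - ghat k‖ ^ 2 = ‖g‖ ^ 2 - 2 * ⟪g, ghat k⟫ + ‖ghat k‖ ^ 2 :=
        norm_sub_sq_real g (ghat k)
      have herrk := herr k
      rw [← hgdef] at herrk
      -- step inequality: f (x (k+1)) ≤ f (x k) - (1-εrel)/(2L) ‖g‖² + εabs/(2L)
      have key1 : f (x (k + 1)) ≤ f (x k) - (1 / (2 * L)) * ‖g‖ ^ 2
          + (1 / (2 * L)) * ‖g - ghat k‖ ^ 2 := by
        have heq : -(1 / L) * (⟪g, ghat k⟫) + L / 2 * ((1 / L) ^ 2 * ‖ghat k‖ ^ 2)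
            = -(1 / (2 * L)) * ‖g‖ ^ 2 + (1 / (2 * L)) * ‖g - ghat k‖ ^ 2 := by
          rw [hiden]
          field_simp
          ring
        linarith [hd, heq.symm.le]
      have key2 : f (x (k + 1)) ≤ f (x k) - ((1 - εrel) / (2 * L)) * ‖g‖ ^ 2
          + εabs / (2 * L) := by
        have h2L : (0:ℝ) < 1 / (2 * L) := by positivity
        have := mul_le_mul_of_nonneg_left herrk h2L.le
        have heq2 : (1 / (2 * L)) * (εrel * ‖g‖ ^ 2 + εabs)
            = (εrel / (2 * L)) * ‖g‖ ^ 2 + εabs / (2 * L) := by ring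
        have heq3 : (1 / (2 * L)) * ‖g‖ ^ 2 - (εrel / (2 * L)) * ‖g‖ ^ 2
            = ((1 - εrel) / (2 * L)) * ‖g‖ ^ 2 := by ring
        nlinarith [key1]
      -- restricted strong convexity lower bound on gradient norm
      obtain ⟨w, hw1, hw2, hw3⟩ := hrsc (x k)
      have hfw : f w = f xstar := le_antisymm (hw1 _) (hmin _)
      have hconvk := convex_grad_ineq f hconv hdiff (x k) w
      have hcs : (⟪g, x k - w⟫) ≤ ‖g‖ * ‖x k - w‖ := real_inner_le_norm _ _
      have hiw : (⟪g, w - x k⟫) = -(⟪g, x k - w⟫) := by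
        rw [← inner_neg_right, neg_sub]
      rw [hfw, hiw] at hconvk
      have he0 : 0 ≤ f (x k) - f xstar := sub_nonneg.mpr (hmin _)
      have h1 : f (x k) - f xstar ≤ ‖g‖ * ‖x k - w‖ := by linarith
      have hge : ν / 2 * (f (x k) - f xstar) ≤ ‖g‖ ^ 2 :=
        aux_rsc hν he0 h1 hw3
      -- combine
      have hcoef : (0:ℝ) ≤ (1 - εrel) / (2 * L) := by
        apply div_nonneg (by linarith) (by linarith)
      have hmono := mul_le_mul_of_nonneg_left hge hcoef
      have hfinal : (1 - εrel) / (2 * L) * (ν / 2) = (1 - εrel) * ν / (4 * L) := by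
        field_simp
        ring
      have hprod : (1 - εrel) / (2 * L) * (ν / 2 * (f (x k) - f xstar))
          = (1 - εrel) * ν / (4 * L) * (f (x k) - f xstar) := by
        rw [← mul_assoc, hfinal]
      rw [hρdef]
      linarith [key2, hmono, hprod.le, hprod.ge]
    intro k
    induction k with
    | zero =>
      simp only [pow_zero, one_mul]
      linarith
    | succ n ih =>
      calc f (x (n + 1)) - f xstar ≤ ρ * (f (x n) - f xstar) + εabs / (2 * L) := key n
        _ ≤ ρ * (ρ ^ n * (f (x 0) - f xstar) + C) + εabs / (2 * L) := by
            exact add_le_add_left (mul_le_mul_of_nonneg_left ih hρ0) _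
        _ = ρ ^ (n + 1) * (f (x 0) - f xstar) + (ρ * C + εabs / (2 * L)) := by ring
        _ = _ := by rw [hCfix]
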